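/- Let g : ℝ → ℝ be a measurable function that is periodic with period p > 0, satisfies g(x) = −g(x + p/2) for all x ∈ ℝ, and satisfies |g(x)| ≤ 1 for all x. Let h : ℝ → ℝ be a nonnegative Lebesgue-integrable function. Let a < b be reals with b − a ≥ p/(2|c_1|), let c_1 ≠ 0 and c_2 be real constants, and suppose there is a finite partition a = x_0 < x_1 < ... < x_m = b such that h is monotone on each interval [x_{i−1}, x_i] for i = 1, ..., m. Suppose x̃ ∈ ℝ is such that ∫_{x̃}^{x̃ + p/(2|c_1|)} h(x) dx ≥ ∫_{x}^{x + p/(2|c_1|)} h(x) dx for all x ∈ [a, b − p/(2|c_1|)]. Then |∫_a^b g(c_1 x + c_2) h(x) dx| ≤ m · ∫_{x̃}^{x̃ + p/(2|c_1|)} h(x) dx. -/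

import Mathlib

open MeasureTheory intervalIntegral

lemma my_integrable_mul {G h : ℝ → ℝ} (hG : Measurable G) (hGb : ∀ y, |G y| ≤ 1)
    (hh : Integrable h) : Integrable (fun t => G t * h t) :=
  hh.bdd_mul (c := 1) hG.aestronglyMeasurable (Filter.Eventually.of_forall fun y => by simpa [Real.norm_eq_abs] using hGb y)

lemma key_mono_aux (G h : ℝ → ℝ) (L : ℝ) (hL : 0 < L)
    (hGmeas : Measurable G) (hGanti : ∀ t, G (t + L) = -G t) (hGbdd : ∀ t, |G t| ≤ 1)
    (hh : ∀ y, 0 ≤ h y) (hhint : Integrable h) :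
    ∀ n : ℕ, ∀ α β : ℝ, α ≤ β → β - α ≤ n * L → MonotoneOn h (Set.Icc α β) →
      |∫ t in α..β, G t * h t| ≤ ∫ t in (max α (β - L))..β, h t := by
  have hGhint : Integrable (fun t => G t * h t) := my_integrable_mul hGmeas hGbdd hhint
  have hhsh : Integrable (fun t => h (t + L)) := by
    simpa using hhint.comp_sub_right (-L)
  have hGhsh : Integrable (fun t => G t * h (t + L)) :=
    hhsh.bdd_mul (c := 1) hGmeas.aestronglyMeasurable (Filter.Eventually.of_forall fun y => by simpa [Real.norm_eq_abs] using hGbdd y)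
  intro n
  induction n using Nat.strong_induction_on with
  | _ n ih =>
    intro α β hαβ hlen hmono
    by_cases h1 : β - α ≤ L
    · -- base case
      have hmax : max α (β - L) = α := max_eq_left (by linarith)
      rw [hmax]
      calc |∫ t in α..β, G t * h t| ≤ ∫ t in α..β, |G t * h t| :=
            abs_integral_le_integral_abs hαβ
        _ ≤ ∫ t in α..β, h t := by
            apply integral_mono_on hαβ hGhint.abs.intervalIntegrable hhint.intervalIntegrable
            intro t _
            rw [abs_mul]
            calc |G t| * |h t| ≤ 1 * |h t| := by
                  exact mul_le_mul_of_nonneg_right (hGbdd t) (abs_nonneg _)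
              _ = h t := by rw [one_mul, abs_of_nonneg (hh t)]
    · push_neg at h1
      have hmax : max α (β - L) = β - L := max_eq_right (by linarith)
      rw [hmax]
      -- pointwise bound helper for intervals where both t and t+L lie in [α, β]
      have hb : ∀ u v : ℝ, α ≤ u → v ≤ β - L → u ≤ v →
          |∫ t in u..v, G t * (h t - h (t + L))| ≤
            (∫ t in (u+L)..(v+L), h t) - ∫ t in u..v, h t := by
        intro u v hu hv huv
        have hint1 : Integrable (fun t => G t * (h t - h (t + L))) := by
          simpa [mul_sub, Pi.sub_def] using hGhint.sub hGhsh
        calc |∫ t in u..v, G t * (h t - h (t + L))|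
            ≤ ∫ t in u..v, |G t * (h t - h (t + L))| := abs_integral_le_integral_abs huv
          _ ≤ ∫ t in u..v, (h (t + L) - h t) := by
              apply integral_mono_on huv hint1.abs.intervalIntegrable
                (hhsh.sub hhint).intervalIntegrable
              intro t ht
              have htm : t ∈ Set.Icc α β := ⟨le_trans hu ht.1, by linarith [ht.2, hL.le]⟩
              have htm' : t + L ∈ Set.Icc α β := ⟨by linarith [htm.1, hL.le], by linarith [ht.2]⟩
              have hle : h t ≤ h (t + L) := hmono htm htm' (by linarith [hL.le])
              rw [abs_mul]
              calc |G t| * |h t - h (t + L)| ≤ 1 * |h t - h (t + L)| :=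
                    mul_le_mul_of_nonneg_right (hGbdd t) (abs_nonneg _)
                _ = h (t + L) - h t := by rw [one_mul, abs_sub_comm, abs_of_nonneg (by linarith)]
          _ = (∫ t in (u+L)..(v+L), h t) - ∫ t in u..v, h t := by
              rw [integral_sub hhsh.intervalIntegrable hhint.intervalIntegrable,
                integral_comp_add_right]
      have hsub : ∀ u v : ℝ, (∫ t in u..v, G t * (h t - h (t + L))) =
          (∫ t in u..v, G t * h t) - ∫ t in u..v, G t * h (t + L) := by
        intro u v
        rw [← integral_sub hGhint.intervalIntegrable hGhsh.intervalIntegrable]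
        apply integral_congr
        intro t _
        ring
      by_cases h2 : β - α ≤ 2 * L
      · -- case 2 : L < β - α ≤ 2L
        have e1 : (∫ t in α..β, G t * h t) =
            (∫ t in α..(β - L), G t * h t) + ∫ t in (β - L)..β, G t * h t :=
          (integral_add_adjacent_intervals hGhint.intervalIntegrable
            hGhint.intervalIntegrable).symm
        have e2 : (∫ t in (β - L)..β, G t * h t) =
            -∫ t in (β - 2*L)..(β - L), G t * h (t + L) := by
          have : (∫ t in (β - 2*L)..(β - L), G (t + L) * h (t + L)) =
              ∫ t in (β - L)..β, G t * h t := by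
            rw [integral_comp_add_right (fun t => G t * h t)]
            ring_nf
          rw [← this]
          have h9 : (∫ t in (β - 2*L)..(β - L), G (t + L) * h (t + L)) =
              ∫ t in (β - 2*L)..(β - L), -(G t * h (t + L)) :=
            integral_congr (fun t _ => by rw [hGanti t]; ring)
          rw [h9, intervalIntegral.integral_neg]
        have e3 : (∫ t in (β - 2*L)..(β - L), G t * h (t + L)) =
            (∫ t in (β - 2*L)..α, G t * h (t + L)) + ∫ t in α..(β - L), G t * h (t + L) :=
          (integral_add_adjacent_intervals hGhsh.intervalIntegrable
            hGhsh.intervalIntegrable).symm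
        have e4 : (∫ t in α..β, G t * h t) =
            (∫ t in α..(β - L), G t * (h t - h (t + L))) -
              ∫ t in (β - 2*L)..α, G t * h (t + L) := by
          rw [e1, e2, e3, hsub]
          ring
        have b1 : |∫ t in α..(β - L), G t * (h t - h (t + L))| ≤
            (∫ t in (α+L)..(β - L + L), h t) - ∫ t in α..(β - L), h t :=
          hb α (β - L) le_rfl le_rfl (by linarith)
        have b2 : |∫ t in (β - 2*L)..α, G t * h (t + L)| ≤
            ∫ t in (β - L)..(α + L), h t := by
          calc |∫ t in (β - 2*L)..α, G t * h (t + L)|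
              ≤ ∫ t in (β - 2*L)..α, |G t * h (t + L)| :=
                abs_integral_le_integral_abs (by linarith)
            _ ≤ ∫ t in (β - 2*L)..α, h (t + L) := by
                apply integral_mono_on (by linarith) hGhsh.abs.intervalIntegrable
                  hhsh.intervalIntegrable
                intro t _
                rw [abs_mul]
                calc |G t| * |h (t + L)| ≤ 1 * |h (t + L)| :=
                      mul_le_mul_of_nonneg_right (hGbdd t) (abs_nonneg _)
                  _ = h (t + L) := by rw [one_mul, abs_of_nonneg (hh _)]
            _ = ∫ t in (β - 2*L + L)..(α + L), h t := integral_comp_add_right _ L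
            _ = ∫ t in (β - L)..(α + L), h t := by ring_nf
        have hsplit : (∫ t in (β - L)..β, h t) =
            (∫ t in (β - L)..(α + L), h t) + ∫ t in (α + L)..β, h t :=
          (integral_add_adjacent_intervals hhint.intervalIntegrable
            hhint.intervalIntegrable).symm
        have hnn : (0:ℝ) ≤ ∫ t in α..(β - L), h t :=
          integral_nonneg (by linarith) (fun t _ => hh t)
        have heq : β - L + L = β := by ring
        rw [e4]
        calc |(∫ t in α..(β - L), G t * (h t - h (t + L))) -
              ∫ t in (β - 2*L)..α, G t * h (t + L)|
            ≤ |∫ t in α..(β - L), G t * (h t - h (t + L))| +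
              |∫ t in (β - 2*L)..α, G t * h (t + L)| := abs_sub _ _
          _ ≤ ((∫ t in (α+L)..(β - L + L), h t) - ∫ t in α..(β - L), h t) +
              ∫ t in (β - L)..(α + L), h t := add_le_add b1 b2
          _ ≤ ∫ t in (β - L)..β, h t := by rw [heq, hsplit]; linarith
      · -- case 3 : β - α > 2L
        push_neg at h2
        have hn2 : (2:ℝ) < n := by
          by_contra hc
          push_neg at hc
          have : (n:ℝ) * L ≤ 2 * L := mul_le_mul_of_nonneg_right hc hL.le
          linarith
        have hn2' : 2 ≤ n := by exact_mod_cast (by exact_mod_cast hn2.le : (2:ℝ) ≤ n)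
        have e1 : (∫ t in α..β, G t * h t) =
            (∫ t in α..(β - 2*L), G t * h t) + ∫ t in (β - 2*L)..β, G t * h t :=
          (integral_add_adjacent_intervals hGhint.intervalIntegrable
            hGhint.intervalIntegrable).symm
        have e2 : (∫ t in (β - L)..β, G t * h t) =
            -∫ t in (β - 2*L)..(β - L), G t * h (t + L) := by
          have : (∫ t in (β - 2*L)..(β - L), G (t + L) * h (t + L)) =
              ∫ t in (β - L)..β, G t * h t := by
            rw [integral_comp_add_right (fun t => G t * h t)]
            ring_nf
          rw [← this]
          have h9 : (∫ t in (β - 2*L)..(β - L), G (t + L) * h (t + L)) =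
              ∫ t in (β - 2*L)..(β - L), -(G t * h (t + L)) :=
            integral_congr (fun t _ => by rw [hGanti t]; ring)
          rw [h9, intervalIntegral.integral_neg]
        have e3 : (∫ t in (β - 2*L)..β, G t * h t) =
            ∫ t in (β - 2*L)..(β - L), G t * (h t - h (t + L)) := by
          have : (∫ t in (β - 2*L)..β, G t * h t) =
              (∫ t in (β - 2*L)..(β - L), G t * h t) + ∫ t in (β - L)..β, G t * h t :=
            (integral_add_adjacent_intervals hGhint.intervalIntegrable
              hGhint.intervalIntegrable).symm
          rw [this, e2, hsub]
          ring
        -- IH application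
        have ihlen : β - 2*L - α ≤ ((n - 2 : ℕ) : ℝ) * L := by
          have : ((n - 2 : ℕ) : ℝ) = (n : ℝ) - 2 := by
            have := Nat.cast_sub hn2' (R := ℝ)
            simpa using this
          rw [this]
          linarith
        have ihmono : MonotoneOn h (Set.Icc α (β - 2*L)) :=
          hmono.mono (Set.Icc_subset_Icc le_rfl (by linarith))
        have ihb := ih (n - 2) (by omega) α (β - 2*L) (by linarith) ihlen ihmono
        -- bound the IH window by the adjacent window
        set u := max α (β - 2*L - L) with hu
        have hu1 : α ≤ u := le_max_left _ _
        have hu2 : β - 3*L ≤ u := by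
          have : β - 2*L - L = β - 3*L := by ring
          rw [hu, this]; exact le_max_right _ _
        have hu3 : u ≤ β - 2*L := max_le (by linarith) (by linarith)
        have ihb' : |∫ t in α..(β - 2*L), G t * h t| ≤ ∫ t in u..(β - 2*L), h t := by
          have : max α (β - 2*L - L) = u := rfl
          calc |∫ t in α..(β - 2*L), G t * h t| ≤ ∫ t in (max α (β - 2*L - L))..(β - 2*L), h t :=
              ihb
            _ = ∫ t in u..(β - 2*L), h t := by rw [this]
        have hshiftb : (∫ t in u..(β - 2*L), h t) ≤ ∫ t in (β - 2*L)..(β - L), h t := by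
          have s1 : (∫ t in u..(β - 2*L), h t) ≤ ∫ t in u..(β - 2*L), h (t + L) := by
            apply integral_mono_on hu3 hhint.intervalIntegrable hhsh.intervalIntegrable
            intro t ht
            have htm : t ∈ Set.Icc α β := ⟨le_trans hu1 ht.1, by linarith [ht.2, hL.le]⟩
            have htm' : t + L ∈ Set.Icc α β := ⟨by linarith [htm.1, hL.le], by linarith [ht.2]⟩
            exact hmono htm htm' (by linarith [hL.le])
          have s2 : (∫ t in u..(β - 2*L), h (t + L)) = ∫ t in (u + L)..(β - L), h t := by
            rw [integral_comp_add_right]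
            ring_nf
          have s3 : (∫ t in (β - 2*L)..(β - L), h t) =
              (∫ t in (β - 2*L)..(u + L), h t) + ∫ t in (u + L)..(β - L), h t :=
            (integral_add_adjacent_intervals hhint.intervalIntegrable
              hhint.intervalIntegrable).symm
          have s4 : (0:ℝ) ≤ ∫ t in (β - 2*L)..(u + L), h t :=
            integral_nonneg (by linarith) (fun t _ => hh t)
          linarith [s1, s2.le, s2.ge]
        have b2 : |∫ t in (β - 2*L)..(β - L), G t * (h t - h (t + L))| ≤
            (∫ t in (β - 2*L + L)..(β - L + L), h t) - ∫ t in (β - 2*L)..(β - L), h t :=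
          hb (β - 2*L) (β - L) (by linarith) le_rfl (by linarith)
        have heq1 : β - 2*L + L = β - L := by ring
        have heq2 : β - L + L = β := by ring
        rw [heq1, heq2] at b2
        rw [e1]
        calc |(∫ t in α..(β - 2*L), G t * h t) + ∫ t in (β - 2*L)..β, G t * h t|
            ≤ |∫ t in α..(β - 2*L), G t * h t| + |∫ t in (β - 2*L)..β, G t * h t| :=
              abs_add_le _ _
          _ ≤ (∫ t in u..(β - 2*L), h t) +
              ((∫ t in (β - L)..β, h t) - ∫ t in (β - 2*L)..(β - L), h t) := by
              rw [e3]; exact add_le_add ihb' b2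
          _ ≤ ∫ t in (β - L)..β, h t := by linarith [hshiftb]

lemma key_piece (G h : ℝ → ℝ) (L : ℝ) (hL : 0 < L)
    (hGmeas : Measurable G) (hGanti : ∀ t, G (t + L) = -G t) (hGbdd : ∀ t, |G t| ≤ 1)
    (hh : ∀ y, 0 ≤ h y) (hhint : Integrable h)
    (α β : ℝ) (hαβ : α ≤ β)
    (hm : MonotoneOn h (Set.Icc α β) ∨ AntitoneOn h (Set.Icc α β)) :
    ∃ u v : ℝ, α ≤ u ∧ u ≤ v ∧ v ≤ β ∧ v - u ≤ L ∧
      |∫ t in α..β, G t * h t| ≤ ∫ t in u..v, h t := by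
  obtain ⟨n, hn⟩ := exists_nat_ge ((β - α) / L)
  have hlen : β - α ≤ n * L := by
    rw [div_le_iff₀ hL] at hn
    linarith
  rcases hm with hmono | hanti
  · refine ⟨max α (β - L), β, le_max_left _ _, max_le hαβ (by linarith), le_rfl, ?_, ?_⟩
    · have := le_max_right α (β - L); linarith [le_max_right α (β - L)]
    · exact key_mono_aux G h L hL hGmeas hGanti hGbdd hh hhint n α β hαβ hlen hmono
  · -- reflect
    set G' : ℝ → ℝ := fun t => G (α + β - t) with hG'
    set h' : ℝ → ℝ := fun t => h (α + β - t) with hh'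
    have hG'meas : Measurable G' := hGmeas.comp (measurable_const.sub measurable_id)
    have hG'anti : ∀ t, G' (t + L) = -G' t := by
      intro t
      have : G (α + β - t) = G ((α + β - t - L) + L) := by ring_nf
      simp only [hG']
      rw [show α + β - (t + L) = α + β - t - L by ring]
      have h2 := hGanti (α + β - t - L)
      rw [show α + β - t - L + L = α + β - t by ring] at h2
      linarith [h2]
    have hG'bdd : ∀ t, |G' t| ≤ 1 := fun t => hGbdd _
    have hh'nn : ∀ y, 0 ≤ h' y := fun y => hh _
    have hh'int : Integrable h' := hhint.comp_sub_left (α + β)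
    have hh'mono : MonotoneOn h' (Set.Icc α β) := by
      intro s hs t ht hst
      have hs' : α + β - s ∈ Set.Icc α β := ⟨by linarith [hs.2], by linarith [hs.1]⟩
      have ht' : α + β - t ∈ Set.Icc α β := ⟨by linarith [ht.2], by linarith [ht.1]⟩
      exact hanti ht' hs' (by linarith)
    have heq : (∫ t in α..β, G t * h t) = ∫ t in α..β, G' t * h' t := by
      have := integral_comp_sub_left (a := α) (b := β) (fun t => G t * h t) (α + β)
      simp only [add_sub_cancel_right, add_sub_cancel_left] at this
      exact this.symm
    have hkey := key_mono_aux G' h' L hL hG'meas hG'anti hG'bdd hh'nn hh'int n α β hαβ hlen hh'mono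
    have heq2 : (∫ t in (max α (β - L))..β, h' t) = ∫ t in α..(min β (α + L)), h t := by
      have := integral_comp_sub_left (a := max α (β - L)) (b := β) h (α + β)
      simp only [hh']
      rw [this]
      have e1 : α + β - β = α := by ring
      have e2 : α + β - max α (β - L) = min β (α + L) := by
        rcases le_total α (β - L) with hc | hc
        · rw [max_eq_right hc, min_eq_right (by linarith)]; ring
        · rw [max_eq_left hc, min_eq_left (by linarith)]; ring
      rw [e1, e2]
    refine ⟨α, min β (α + L), le_rfl, le_min hαβ (by linarith), min_le_left _ _, ?_, ?_⟩
    · have := min_le_right β (α + L); linarith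
    · rw [heq, ← heq2]; exact hkey

/-- If `g` is periodic with period `p > 0`, antiperiodic with antiperiod `p/2`, and
bounded by `1`, `h` is a nonnegative integrable function that is piecewise monotone on
`[a, b]` with respect to a partition `a = x 0 < x 1 < ... < x m = b`, and `xt` maximizes
`x ↦ ∫_{x}^{x + p/(2|c₁|)} h` over `x ∈ [a, b - p/(2|c₁|)]`, then
`|∫_a^b g (c₁ x + c₂) h x dx| ≤ m ∫_{xt}^{xt + p/(2|c₁|)} h x dx`. -/
theorem abs_integral_mul_le_of_piecewise_monotone
    (g h : ℝ → ℝ) (p : ℝ) (hp : 0 < p)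
    (hgmeas : Measurable g)
    (hgper : Function.Periodic g p)
    (hganti : ∀ y, g y = -g (y + p / 2))
    (hgbdd : ∀ y, |g y| ≤ 1)
    (hh : ∀ y, 0 ≤ h y) (hhint : Integrable h)
    (c₁ c₂ : ℝ) (hc₁ : c₁ ≠ 0)
    (a b : ℝ) (hab : a < b) (hlen : p / (2 * |c₁|) ≤ b - a)
    (m : ℕ) (x : ℕ → ℝ) (hx0 : x 0 = a) (hxm : x m = b)
    (hxlt : ∀ i < m, x i < x (i + 1))
    (hmono : ∀ i < m,
      MonotoneOn h (Set.Icc (x i) (x (i + 1))) ∨ AntitoneOn h (Set.Icc (x i) (x (i + 1))))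
    (xt : ℝ)
    (hmax : ∀ y ∈ Set.Icc a (b - p / (2 * |c₁|)),
      (∫ t in y..(y + p / (2 * |c₁|)), h t) ≤ ∫ t in xt..(xt + p / (2 * |c₁|)), h t) :
    |∫ t in a..b, g (c₁ * t + c₂) * h t| ≤
      m * ∫ t in xt..(xt + p / (2 * |c₁|)), h t := by
  set L : ℝ := p / (2 * |c₁|) with hLdef
  have hc₁abs : 0 < |c₁| := abs_pos.mpr hc₁
  have hL : 0 < L := div_pos hp (by positivity)
  set G : ℝ → ℝ := fun t => g (c₁ * t + c₂) with hGdef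
  have hGmeas : Measurable G :=
    hgmeas.comp ((measurable_const.mul measurable_id).add measurable_const)
  have hGbdd : ∀ t, |G t| ≤ 1 := fun t => hgbdd _
  have hGanti : ∀ t, G (t + L) = -G t := by
    intro t
    simp only [hGdef]
    rcases lt_or_gt_of_ne hc₁ with hneg | hpos
    · have habs : |c₁| = -c₁ := abs_of_neg hneg
      have hcL : c₁ * L = -(p / 2) := by
        rw [hLdef, habs]
        field_simp
      rw [show c₁ * (t + L) + c₂ = (c₁ * t + c₂) + (-(p/2)) by rw [mul_add, hcL]; ring]
      have h2 := hganti (c₁ * t + c₂ - p / 2)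
      rw [show c₁ * t + c₂ - p / 2 + p / 2 = c₁ * t + c₂ by ring] at h2
      rw [show c₁ * t + c₂ + -(p/2) = c₁ * t + c₂ - p / 2 by ring]
      linarith [h2]
    · have habs : |c₁| = c₁ := abs_of_pos hpos
      have hcL : c₁ * L = p / 2 := by
        rw [hLdef, habs]
        field_simp
      rw [show c₁ * (t + L) + c₂ = (c₁ * t + c₂) + p/2 by rw [mul_add, hcL]; ring]
      linarith [hganti (c₁ * t + c₂)]
  have hGhint : Integrable (fun t => G t * h t) := my_integrable_mul hGmeas hGbdd hhint
  set M : ℝ := ∫ t in xt..(xt + L), h t with hMdef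
  have haL : a ≤ b - L := by linarith
  -- partition facts
  have hxa : ∀ k, k ≤ m → a ≤ x k := by
    intro k
    induction k with
    | zero => intro _; rw [hx0]
    | succ k ihk => intro hk; exact le_trans (ihk (by omega)) (hxlt k (by omega)).le
  have hxb : ∀ d k, k + d = m → x k ≤ b := by
    intro d
    induction d with
    | zero => intro k hk; have hkm : k = m := by omega
              rw [hkm, hxm]
    | succ d ihd =>
      intro k hk
      exact le_trans (hxlt k (by omega)).le (ihd (k+1) (by omega))
  -- per-piece bound
  have hpiece : ∀ i < m, |∫ t in (x i)..(x (i+1)), G t * h t| ≤ M := by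
    intro i hi
    obtain ⟨u, v, huα, huv, hvβ, hvuL, hbd⟩ :=
      key_piece G h L hL hGmeas hGanti hGbdd hh hhint (x i) (x (i+1)) (hxlt i hi).le
        (hmono i hi)
    have hau : a ≤ u := le_trans (hxa i (by omega)) huα
    have hvb : v ≤ b := le_trans hvβ (by
      obtain ⟨d, hd⟩ : ∃ d, (i+1) + d = m := ⟨m - (i+1), by omega⟩
      exact hxb d (i+1) hd)
    set y : ℝ := min u (b - L) with hydef
    have hy1 : a ≤ y := le_min hau haL
    have hy2 : y ≤ b - L := min_le_right _ _
    have hyu : y ≤ u := min_le_left _ _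
    have hvyL : v ≤ y + L := by
      have : y + L = min (u + L) (b - L + L) := (min_add_add_right u (b-L) L).symm
      rw [this]
      exact le_min (by linarith) (by linarith)
    have hwin : (∫ t in u..v, h t) ≤ ∫ t in y..(y + L), h t := by
      have s1 : (∫ t in y..(y+L), h t) =
          (∫ t in y..u, h t) + ((∫ t in u..v, h t) + ∫ t in v..(y+L), h t) := by
        rw [integral_add_adjacent_intervals hhint.intervalIntegrable hhint.intervalIntegrable,
          integral_add_adjacent_intervals hhint.intervalIntegrable hhint.intervalIntegrable]
      have s2 : (0:ℝ) ≤ ∫ t in y..u, h t := integral_nonneg hyu (fun t _ => hh t)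
      have s3 : (0:ℝ) ≤ ∫ t in v..(y+L), h t := integral_nonneg hvyL (fun t _ => hh t)
      linarith
    have hmaxy : (∫ t in y..(y + L), h t) ≤ M := hmax y ⟨hy1, hy2⟩
    linarith
  -- assemble
  have hm1 : 1 ≤ m := by
    by_contra hc
    push_neg at hc
    interval_cases m
    rw [hx0] at hxm
    exact absurd hxm (by linarith)
  have hsum : ∑ i ∈ Finset.range m, ∫ t in (x i)..(x (i+1)), G t * h t =
      ∫ t in a..b, G t * h t := by
    rw [← hx0, ← hxm]
    exact sum_integral_adjacent_intervals (fun k _ => hGhint.intervalIntegrable)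
  calc |∫ t in a..b, g (c₁ * t + c₂) * h t|
      = |∑ i ∈ Finset.range m, ∫ t in (x i)..(x (i+1)), G t * h t| := by rw [hsum]
    _ ≤ ∑ i ∈ Finset.range m, |∫ t in (x i)..(x (i+1)), G t * h t| :=
        Finset.abs_sum_le_sum_abs _ _
    _ ≤ ∑ _i ∈ Finset.range m, M :=
        Finset.sum_le_sum (fun i hi => hpiece i (Finset.mem_range.mp hi))
    _ = m * M := by rw [Finset.sum_const, Finset.card_range, nsmul_eq_mul]
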